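/- Let X = Y = [0,1) pointed at 0. The smash product X ∧ Y is not first countable at its basepoint: there is no countable family of neighbourhoods of the basepoint that is a local basis. Consequently X ∧ Y cannot be embedded into any first-countable space; in particular [0,1) ∧ [0,1] does not embed into [0,1] ∧ [0,1], so the functor − ∧ [0,1] does not preserve subspace embeddings. -/

import Mathlib

open Topology Metric Filter

section SmashDefs

variable {X Y : Type*} [TopologicalSpace X] [TopologicalSpace Y]

/-- The relation on `X × Y` collapsing the wedge `X × {y₀} ∪ {x₀} × Y` to a point. -/
def smashRel (x₀ : X) (y₀ : Y) : X × Y → X × Y → Prop :=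
  fun p q => p = q ∨ ((p.1 = x₀ ∨ p.2 = y₀) ∧ (q.1 = x₀ ∨ q.2 = y₀))

/-- The smash product `X ∧ Y` of pointed spaces, as the quotient `(X × Y)/(X ∨ Y)`
collapsing the wedge to a point, with the quotient topology. -/
def Smash (x₀ : X) (y₀ : Y) : Type _ := Quot (smashRel x₀ y₀)

instance (x₀ : X) (y₀ : Y) : TopologicalSpace (Smash x₀ y₀) :=
  inferInstanceAs (TopologicalSpace (Quot _))

/-- Canonical projection `η : X × Y → X ∧ Y`. -/
def Smash.mk (x₀ : X) (y₀ : Y) (p : X × Y) : Smash x₀ y₀ := Quot.mk _ p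

/-- Basepoint of the smash product. -/
def Smash.pt (x₀ : X) (y₀ : Y) : Smash x₀ y₀ := Smash.mk x₀ y₀ (x₀, y₀)

end SmashDefs

/-- `[0,1)` pointed at `0`. -/
def Ico01pt : Set.Ico (0:ℝ) 1 := ⟨0, by constructor <;> norm_num⟩

/-- `[0,1]` pointed at `0`. -/
def Icc01pt : Set.Icc (0:ℝ) 1 := ⟨0, by constructor <;> norm_num⟩

section Aux

variable {X Y : Type*} [TopologicalSpace X] [TopologicalSpace Y]

lemma smashRel_equivalence (x₀ : X) (y₀ : Y) : Equivalence (smashRel x₀ y₀) := by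
  constructor
  · intro p; exact Or.inl rfl
  · intro p q h
    rcases h with h | ⟨h1, h2⟩
    · exact Or.inl h.symm
    · exact Or.inr ⟨h2, h1⟩
  · intro p q r hpq hqr
    rcases hpq with rfl | ⟨h1, h2⟩
    · exact hqr
    · rcases hqr with rfl | ⟨h3, h4⟩
      · exact Or.inr ⟨h1, h2⟩
      · exact Or.inr ⟨h1, h4⟩

lemma smash_mk_eq_iff (x₀ : X) (y₀ : Y) (p q : X × Y) :
    Smash.mk x₀ y₀ p = Smash.mk x₀ y₀ q ↔ smashRel x₀ y₀ p q := by
  show (Quot.mk _ p : Quot (smashRel x₀ y₀)) = Quot.mk _ q ↔ _; rw [Quot.eq]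
  exact (smashRel_equivalence x₀ y₀).eqvGen_iff

end Aux

/-- Core lemma: for `X = [0,1)` pointed at `0` and any metric space `Y` with a
non-isolated basepoint `y₀`, the smash product is not first countable at its basepoint. -/
lemma smash_not_cg {Y : Type*} [MetricSpace Y] (y₀ : Y)
    (hy : ∀ ε : ℝ, 0 < ε → ∃ y : Y, y ≠ y₀ ∧ dist y y₀ < ε) :
    ¬ (𝓝 (Smash.pt Ico01pt y₀)).IsCountablyGenerated := by
  intro h
  obtain ⟨s, hs⟩ := (𝓝 (Smash.pt Ico01pt y₀)).exists_antitone_basis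
  -- points escaping to 1
  have ha_mem : ∀ n : ℕ, (1 - 1/((n:ℝ)+2)) ∈ Set.Ico (0:ℝ) 1 := by
    intro n
    have h2 : (0:ℝ) < (n:ℝ) + 2 := by positivity
    constructor
    · have : 1/((n:ℝ)+2) ≤ 1 := by
        rw [div_le_one h2]; linarith [Nat.cast_nonneg (α := ℝ) n]
      linarith
    · have : 0 < 1/((n:ℝ)+2) := by positivity
      linarith
  set a : ℕ → Set.Ico (0:ℝ) 1 := fun n => ⟨1 - 1/((n:ℝ)+2), ha_mem n⟩ with ha_def
  -- choose second coordinates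
  have key : ∀ n : ℕ, ∃ y : Y, y ≠ y₀ ∧
      Smash.mk Ico01pt y₀ (a n, y) ∈ s n := by
    intro n
    have hmk : Smash.mk Ico01pt y₀ (a n, y₀) = Smash.pt Ico01pt y₀ :=
      Quot.sound (Or.inr ⟨Or.inr rfl, Or.inl rfl⟩)
    have hsn : s n ∈ 𝓝 (Smash.pt Ico01pt y₀) := hs.mem n
    have hpre : Smash.mk Ico01pt y₀ ⁻¹' s n ∈ 𝓝 ((a n, y₀) : Set.Ico (0:ℝ) 1 × Y) := by
      have := (continuous_quot_mk (r := smashRel Ico01pt y₀)).continuousAt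
        (x := ((a n, y₀) : Set.Ico (0:ℝ) 1 × Y))
      exact this (by rw [show Quot.mk _ ((a n, y₀) : Set.Ico (0:ℝ) 1 × Y) = Smash.pt Ico01pt y₀ from hmk]; exact hsn)
    rw [Metric.mem_nhds_iff] at hpre
    obtain ⟨ε, hε, hball⟩ := hpre
    obtain ⟨y, hy1, hy2⟩ := hy ε hε
    refine ⟨y, hy1, hball ?_⟩
    rw [Metric.mem_ball, Prod.dist_eq]
    simp only [dist_self]
    rw [sup_eq_right.2 dist_nonneg]
    exact hy2
  choose b hb1 hb2 using key
  set p : ℕ → Set.Ico (0:ℝ) 1 × Y := fun n => (a n, b n) with hp_def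
  -- range p is closed
  have hPclosed : IsClosed (Set.range p) := by
    rw [← isOpen_compl_iff, Metric.isOpen_iff]
    intro z hz
    have hx1 : (z.1 : ℝ) < 1 := z.1.2.2
    obtain ⟨N, hN⟩ := exists_nat_one_div_lt (ε := (1 - (z.1:ℝ))/2) (by linarith)
    have hzne : ∀ n, z ≠ p n := by
      intro n hzn; exact hz ⟨n, hzn.symm⟩
    set δ : ℝ := (Finset.range (N+1)).inf' ⟨0, by simp⟩ (fun n => dist z (p n)) with hδdef
    have hδpos : 0 < δ := by
      rw [hδdef]; refine (Finset.lt_inf'_iff _).2 ?_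
      intro i _
      exact dist_pos.2 (hzne i)
    refine ⟨min ((1 - (z.1:ℝ))/2) δ, lt_min (by linarith) hδpos, ?_⟩
    intro w hw hwP
    obtain ⟨n, rfl⟩ := hwP
    rw [Metric.mem_ball] at hw
    rcases le_or_gt n N with hn | hn
    · have h1 : δ ≤ dist z (p n) :=
        Finset.inf'_le _ (Finset.mem_range.2 (Nat.lt_succ_of_le hn))
      rw [dist_comm] at hw
      have h3 : dist z (p n) < δ := lt_of_lt_of_le hw (min_le_right _ _)
      exact absurd (h1.trans_lt h3) (lt_irrefl _)
    · -- n > N : first coordinates are far apart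
      have hd1 : dist (z.1) ((p n).1) ≤ dist z (p n) := by
        rw [Prod.dist_eq]; exact le_max_left _ _
      have han : (1 - (z.1:ℝ))/2 < ((a n : Set.Ico (0:ℝ) 1) : ℝ) - (z.1:ℝ) := by
        have h1 : 1/((n:ℝ)+2) ≤ 1/((N:ℝ)+1) := by
          apply one_div_le_one_div_of_le (by positivity)
          have : (N:ℝ) ≤ (n:ℝ) := by exact_mod_cast le_of_lt hn
          linarith
        have : ((a n : Set.Ico (0:ℝ) 1) : ℝ) = 1 - 1/((n:ℝ)+2) := rfl
        rw [this]
        linarith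
      have : dist z (p n) ≤ (1 - (z.1:ℝ))/2 := by
        rw [dist_comm] at hw
        exact le_of_lt (lt_of_lt_of_le hw (min_le_left _ _))
      have h2 : ((a n : Set.Ico (0:ℝ) 1) : ℝ) - (z.1:ℝ) ≤ dist (z.1) ((p n).1) := by
        rw [Subtype.dist_eq, Real.dist_eq]
        have : ((p n).1 : ℝ) = ((a n : Set.Ico (0:ℝ) 1) : ℝ) := rfl
        rw [this]
        rw [abs_sub_comm]
        exact le_abs_self _
      exact absurd (han.trans_le (h2.trans (hd1.trans this))) (lt_irrefl _)
  -- the saturated open set and contradiction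
  set W : Set (Set.Ico (0:ℝ) 1 × Y) := (Set.range p)ᶜ with hW_def
  have hWopen : IsOpen W := hPclosed.isOpen_compl
  have hwedgeW : ∀ q : Set.Ico (0:ℝ) 1 × Y, (q.1 = Ico01pt ∨ q.2 = y₀) → q ∈ W := by
    intro q hq hqP
    obtain ⟨n, rfl⟩ := hqP
    rcases hq with hq | hq
    · have : ((a n : Set.Ico (0:ℝ) 1) : ℝ) = 0 := by
        rw [show ((p n).1) = a n from rfl] at hq
        exact congrArg Subtype.val hq
      have h0 : (0:ℝ) < 1/((n:ℝ)+2) := by positivity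
      have h1 : 1/((n:ℝ)+2) ≤ 1 := by
        rw [div_le_one (by positivity)]; linarith [Nat.cast_nonneg (α := ℝ) n]
      have : (1:ℝ) - 1/((n:ℝ)+2) = 0 := this
      have hlt : 1/((n:ℝ)+2) < 1 := by
        rw [div_lt_one (by positivity)]; linarith [Nat.cast_nonneg (α := ℝ) n]
      linarith
    · exact hb1 n hq
  have hTopen : IsOpen (Smash.mk Ico01pt y₀ '' W) := by
    rw [show Smash.mk Ico01pt y₀ '' W = Quot.mk (smashRel Ico01pt y₀) '' W from rfl]
    refine (isOpen_coinduced (f := Quot.mk (smashRel Ico01pt y₀))).2 ?_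
    have : Quot.mk (smashRel Ico01pt y₀) ⁻¹' (Quot.mk (smashRel Ico01pt y₀) '' W) = W := by
      ext q
      simp only [Set.mem_preimage, Set.mem_image]
      constructor
      · rintro ⟨w, hwW, hw⟩
        have := (smash_mk_eq_iff Ico01pt y₀ w q).1 hw
        rcases this with rfl | ⟨_, h2⟩
        · exact hwW
        · exact hwedgeW q h2
      · intro hq; exact ⟨q, hq, rfl⟩
    rw [this]
    exact hWopen
  have hptW : Smash.pt Ico01pt y₀ ∈ Smash.mk Ico01pt y₀ '' W :=
    ⟨(Ico01pt, y₀), hwedgeW _ (Or.inl rfl), rfl⟩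
  have hTnhds : Smash.mk Ico01pt y₀ '' W ∈ 𝓝 (Smash.pt Ico01pt y₀) :=
    hTopen.mem_nhds hptW
  obtain ⟨n, -, hn⟩ := hs.toHasBasis.mem_iff.1 hTnhds
  have hmem : Smash.mk Ico01pt y₀ (p n) ∈ Smash.mk Ico01pt y₀ '' W := hn (hb2 n)
  obtain ⟨w, hwW, hw⟩ := hmem
  have := (smash_mk_eq_iff Ico01pt y₀ w (p n)).1 hw
  rcases this with rfl | ⟨_, h2⟩
  · exact hwW ⟨n, rfl⟩
  · rcases h2 with h2 | h2
    · have hval : ((p n).1 : ℝ) = (0:ℝ) := congrArg Subtype.val h2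
      have hval2 : (1:ℝ) - 1/((n:ℝ)+2) = 0 := hval
      have h0 : (0:ℝ) < 1/((n:ℝ)+2) := by positivity
      have hlt : 1/((n:ℝ)+2) < 1 := by
        rw [div_lt_one (by positivity)]; linarith [Nat.cast_nonneg (α := ℝ) n]
      linarith
    · exact hb1 n h2

section IccFC

local notation "K" => (Set.Icc (0:ℝ) 1 × Set.Icc (0:ℝ) 1 : Type)

/-- The projection to `[0,1] ∧ [0,1]` is a closed map. -/
lemma icc_smash_closed_image {C : Set (Set.Icc (0:ℝ) 1 × Set.Icc (0:ℝ) 1)}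
    (hC : IsClosed C) : IsClosed (Smash.mk Icc01pt Icc01pt '' C) := by
  have hwedge : IsClosed {z : Set.Icc (0:ℝ) 1 × Set.Icc (0:ℝ) 1 |
      z.1 = Icc01pt ∨ z.2 = Icc01pt} := by
    have h1 : IsClosed {z : Set.Icc (0:ℝ) 1 × Set.Icc (0:ℝ) 1 | z.1 = Icc01pt} :=
      isClosed_eq continuous_fst continuous_const
    have h2 : IsClosed {z : Set.Icc (0:ℝ) 1 × Set.Icc (0:ℝ) 1 | z.2 = Icc01pt} :=
      isClosed_eq continuous_snd continuous_const
    exact h1.union h2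
  rw [← isOpen_compl_iff]; refine (isOpen_coinduced (f := Quot.mk (smashRel Icc01pt Icc01pt))).2 ?_
  show IsOpen (Quot.mk (smashRel Icc01pt Icc01pt) ⁻¹' (Smash.mk Icc01pt Icc01pt '' C))ᶜ
  rw [isOpen_compl_iff]
  by_cases hmeets : ∃ c ∈ C, c.1 = Icc01pt ∨ c.2 = Icc01pt
  · have : Quot.mk (smashRel Icc01pt Icc01pt) ⁻¹' (Smash.mk Icc01pt Icc01pt '' C) =
        C ∪ {z : Set.Icc (0:ℝ) 1 × Set.Icc (0:ℝ) 1 | z.1 = Icc01pt ∨ z.2 = Icc01pt} := by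
      ext z
      simp only [Set.mem_preimage, Set.mem_image, Set.mem_union, Set.mem_setOf_eq]
      constructor
      · rintro ⟨c, hc, hcz⟩
        rcases (smash_mk_eq_iff Icc01pt Icc01pt c z).1 hcz with rfl | ⟨_, h2⟩
        · exact Or.inl hc
        · exact Or.inr h2
      · rintro (hz | hz)
        · exact ⟨z, hz, rfl⟩
        · obtain ⟨c, hc, hcw⟩ := hmeets
          exact ⟨c, hc, (smash_mk_eq_iff Icc01pt Icc01pt c z).2 (Or.inr ⟨hcw, hz⟩)⟩
    rw [this]
    exact hC.union hwedge
  · have : Quot.mk (smashRel Icc01pt Icc01pt) ⁻¹' (Smash.mk Icc01pt Icc01pt '' C) = C := by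
      ext z
      simp only [Set.mem_preimage, Set.mem_image]
      constructor
      · rintro ⟨c, hc, hcz⟩
        rcases (smash_mk_eq_iff Icc01pt Icc01pt c z).1 hcz with rfl | ⟨h1, _⟩
        · exact hc
        · exact absurd ⟨c, hc, h1⟩ hmeets
      · intro hz; exact ⟨z, hz, rfl⟩
    rw [this]
    exact hC

lemma icc_smash_cg (y : Smash Icc01pt Icc01pt) : (𝓝 y).IsCountablyGenerated := by
  obtain ⟨z₀, rfl⟩ := Quot.exists_rep y
  set F : Set (Set.Icc (0:ℝ) 1 × Set.Icc (0:ℝ) 1) :=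
    Smash.mk Icc01pt Icc01pt ⁻¹' {Quot.mk (smashRel Icc01pt Icc01pt) z₀} with hF_def
  have hz₀F : z₀ ∈ F := by simp [hF_def, Smash.mk]; exact rfl
  have hFclosed : IsClosed F := by
    by_cases hw : z₀.1 = Icc01pt ∨ z₀.2 = Icc01pt
    · have : F = {z : Set.Icc (0:ℝ) 1 × Set.Icc (0:ℝ) 1 |
          z.1 = Icc01pt ∨ z.2 = Icc01pt} := by
        ext z
        simp only [hF_def, Set.mem_preimage, Set.mem_singleton_iff, Set.mem_setOf_eq]
        constructor
        · intro h
          rcases (smash_mk_eq_iff Icc01pt Icc01pt z z₀).1 h with rfl | ⟨h1, _⟩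
          · exact hw
          · exact h1
        · intro h
          exact (smash_mk_eq_iff Icc01pt Icc01pt z z₀).2 (Or.inr ⟨h, hw⟩)
      rw [this]
      exact (isClosed_eq continuous_fst continuous_const).union
        (isClosed_eq continuous_snd continuous_const)
    · have : F = {z₀} := by
        ext z
        simp only [hF_def, Set.mem_preimage, Set.mem_singleton_iff]
        constructor
        · intro h
          rcases (smash_mk_eq_iff Icc01pt Icc01pt z z₀).1 h with rfl | ⟨_, h2⟩
          · rfl
          · exact absurd h2 hw
        · rintro rfl; rfl
      rw [this]
      exact isClosed_singleton
  have hFcompact : IsCompact F := hFclosed.isCompact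
  set V : ℕ → Set (Smash Icc01pt Icc01pt) :=
    fun n => (Smash.mk Icc01pt Icc01pt '' (Metric.thickening (1/((n:ℝ)+1)) F)ᶜ)ᶜ with hV_def
  have hVnhds : ∀ n, V n ∈ 𝓝 (Quot.mk (smashRel Icc01pt Icc01pt) z₀) := by
    intro n
    have hcl : IsClosed (Smash.mk Icc01pt Icc01pt '' (Metric.thickening (1/((n:ℝ)+1)) F)ᶜ) :=
      icc_smash_closed_image (Metric.isOpen_thickening.isClosed_compl)
    refine hcl.isOpen_compl.mem_nhds ?_
    intro hmem
    obtain ⟨c, hc, hcz⟩ := hmem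
    have : c ∈ F := hcz
    exact hc (Metric.self_subset_thickening (by positivity) F this)
  refine Filter.HasBasis.isCountablyGenerated
    (p := fun _ : ℕ => True) (s := V) (Filter.hasBasis_iff.2 ?_)
  intro t
  constructor
  · intro ht
    obtain ⟨O, hOt, hOopen, hyO⟩ := mem_nhds_iff.1 ht
    have hFU : F ⊆ Smash.mk Icc01pt Icc01pt ⁻¹' O := fun z hz => by
      have : Smash.mk Icc01pt Icc01pt z = Quot.mk (smashRel Icc01pt Icc01pt) z₀ := hz
      rw [Set.mem_preimage, this]; exact hyO
    have hUopen : IsOpen (Smash.mk Icc01pt Icc01pt ⁻¹' O) := by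
      rw [show Smash.mk Icc01pt Icc01pt ⁻¹' O = Quot.mk (smashRel Icc01pt Icc01pt) ⁻¹' O from rfl]
      exact (isOpen_coinduced (f := Quot.mk (smashRel Icc01pt Icc01pt))).1 hOopen
    obtain ⟨δ, hδ, hsub⟩ := hFcompact.exists_thickening_subset_open hUopen hFU
    obtain ⟨n, hn⟩ := exists_nat_one_div_lt hδ
    refine ⟨n, trivial, ?_⟩
    intro w hw
    obtain ⟨z, rfl⟩ := Quot.exists_rep w
    have hz : z ∈ Metric.thickening (1/((n:ℝ)+1)) F := by
      by_contra hzc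
      exact hw ⟨z, hzc, rfl⟩
    have : z ∈ Smash.mk Icc01pt Icc01pt ⁻¹' O :=
      hsub (Metric.thickening_mono (le_of_lt hn) F hz)
    exact hOt this
  · rintro ⟨n, -, hVt⟩
    exact Filter.mem_of_superset (hVnhds n) hVt

end IccFC

lemma hy_Ico : ∀ ε : ℝ, 0 < ε → ∃ y : Set.Ico (0:ℝ) 1, y ≠ Ico01pt ∧ dist y Ico01pt < ε := by
  intro ε hε
  refine ⟨⟨min (ε/2) (1/2), ⟨le_min (by linarith) (by norm_num), ?_⟩⟩, ?_, ?_⟩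
  · exact lt_of_le_of_lt (min_le_right _ _) (by norm_num)
  · intro h
    have : min (ε/2) (1/2) = (0:ℝ) := congrArg Subtype.val h
    have : (0:ℝ) < min (ε/2) (1/2) := lt_min (by linarith) (by norm_num)
    linarith
  · rw [Subtype.dist_eq, Real.dist_eq]
    have h0 : (0:ℝ) ≤ min (ε/2) (1/2) := le_min (by linarith) (by norm_num)
    have : |min (ε/2) (1/2) - (Ico01pt : ℝ)| = min (ε/2) (1/2) := by
      show |min (ε/2) (1/2) - (0:ℝ)| = min (ε/2) (1/2)
      rw [sub_zero, abs_of_nonneg h0]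
    rw [this]
    exact lt_of_le_of_lt (min_le_left _ _) (by linarith)

lemma hy_Icc : ∀ ε : ℝ, 0 < ε → ∃ y : Set.Icc (0:ℝ) 1, y ≠ Icc01pt ∧ dist y Icc01pt < ε := by
  intro ε hε
  refine ⟨⟨min (ε/2) (1/2), ⟨le_min (by linarith) (by norm_num), ?_⟩⟩, ?_, ?_⟩
  · exact le_trans (min_le_right _ _) (by norm_num)
  · intro h
    have : min (ε/2) (1/2) = (0:ℝ) := congrArg Subtype.val h
    have : (0:ℝ) < min (ε/2) (1/2) := lt_min (by linarith) (by norm_num)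
    linarith
  · rw [Subtype.dist_eq, Real.dist_eq]
    have h0 : (0:ℝ) ≤ min (ε/2) (1/2) := le_min (by linarith) (by norm_num)
    have : |min (ε/2) (1/2) - (Icc01pt : ℝ)| = min (ε/2) (1/2) := by
      show |min (ε/2) (1/2) - (0:ℝ)| = min (ε/2) (1/2)
      rw [sub_zero, abs_of_nonneg h0]
    rw [this]
    exact lt_of_le_of_lt (min_le_left _ _) (by linarith)

/-- For `X = Y = [0,1)` pointed at `0`: the smash product `X ∧ Y` is not first countable
at its basepoint; consequently it cannot be embedded into any first-countable space.
In particular `[0,1) ∧ [0,1]` does not embed into `[0,1] ∧ [0,1]`, so `− ∧ [0,1]` does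
not preserve subspace embeddings. -/
theorem smash_Ico_not_firstCountable_at_pt :
    (¬ (𝓝 (Smash.pt Ico01pt Ico01pt)).IsCountablyGenerated) ∧
    (∀ (Z : Type) (_ : TopologicalSpace Z), FirstCountableTopology Z →
      ∀ f : Smash Ico01pt Ico01pt → Z, ¬ IsEmbedding f) ∧
    (∀ f : Smash Ico01pt Icc01pt → Smash Icc01pt Icc01pt, ¬ IsEmbedding f) := by
  refine ⟨smash_not_cg Ico01pt hy_Ico, ?_, ?_⟩
  · intro Z tZ hZ f hf
    haveI := hZ
    apply smash_not_cg Ico01pt hy_Ico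
    rw [hf.toIsInducing.nhds_eq_comap (Smash.pt Ico01pt Ico01pt)]
    exact Filter.comap.isCountablyGenerated _ _
  · intro f hf
    haveI : FirstCountableTopology (Smash Icc01pt Icc01pt) := ⟨icc_smash_cg⟩
    apply smash_not_cg Icc01pt hy_Icc
    rw [hf.toIsInducing.nhds_eq_comap (Smash.pt Ico01pt Icc01pt)]
    exact Filter.comap.isCountablyGenerated _ _
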